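/- Let C be an n×n matrix with strictly positive entries, and let r, c ∈ ℝⁿ be strictly positive vectors with rᵀe = cᵀe. Then there exist diagonal matrices D₁ and D₂ with strictly positive diagonal entries such that P = D₁ C D₂ satisfies Pe = r and Pᵀe = c, and such P is unique. Moreover, D₁ and D₂ are unique up to a scalar factor: if D̃₁, D̃₂ are positive diagonal matrices with D̃₁ C D̃₂ having row sums r and column sums c, then there is α > 0 with D₁ = α D̃₁ and α D₂ = D̃₂. -/

import Mathlib

open Matrix Finset Real

lemma ms_unique {n : ℕ} (hn : 0 < n) (C : Matrix (Fin n) (Fin n) ℝ)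
    (hC : ∀ i j, 0 < C i j)
    (d₁ d₂ e₁ e₂ : Fin n → ℝ) (hd₁ : ∀ i, 0 < d₁ i) (hd₂ : ∀ i, 0 < d₂ i)
    (he₁ : ∀ i, 0 < e₁ i) (he₂ : ∀ i, 0 < e₂ i)
    (hrow : ∀ i, ∑ j, e₁ i * C i j * e₂ j = ∑ j, d₁ i * C i j * d₂ j)
    (hcol : ∀ j, ∑ i, e₁ i * C i j * e₂ j = ∑ i, d₁ i * C i j * d₂ j) :
    ∃ α : ℝ, 0 < α ∧ (∀ i, d₁ i = α * e₁ i) ∧ (∀ i, α * d₂ i = e₂ i) := by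
  haveI : Nonempty (Fin n) := ⟨⟨0, hn⟩⟩
  set a : Fin n → ℝ := fun i => e₁ i / d₁ i with ha
  set b : Fin n → ℝ := fun j => e₂ j / d₂ j with hb
  have hapos : ∀ i, 0 < a i := fun i => div_pos (he₁ i) (hd₁ i)
  have hbpos : ∀ j, 0 < b j := fun j => div_pos (he₂ j) (hd₂ j)
  set P : Matrix (Fin n) (Fin n) ℝ := fun i j => d₁ i * C i j * d₂ j with hP
  have hPpos : ∀ i j, 0 < P i j := fun i j =>
    mul_pos (mul_pos (hd₁ i) (hC i j)) (hd₂ j)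
  have hent : ∀ i j, e₁ i * C i j * e₂ j = P i j * (a i * b j) := by
    intro i j
    have h1 := (hd₁ i).ne'
    have h2 := (hd₂ j).ne'
    simp only [hP, ha, hb]
    field_simp
  have hrow' : ∀ i, ∑ j, P i j * b j = (∑ j, P i j) / a i := by
    intro i
    have h := hrow i
    rw [Finset.sum_congr rfl fun j _ => hent i j] at h
    have key : a i * ∑ j, P i j * b j = ∑ j, P i j := by
      rw [Finset.mul_sum, ← h]
      exact Finset.sum_congr rfl fun j _ => by ring
    rw [eq_div_iff (hapos i).ne']
    linarith [key]
  have hcol' : ∀ j, ∑ i, P i j * a i = (∑ i, P i j) / b j := by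
    intro j
    have h := hcol j
    rw [Finset.sum_congr rfl fun i _ => hent i j] at h
    have key : b j * ∑ i, P i j * a i = ∑ i, P i j := by
      rw [Finset.mul_sum, ← h]
      exact Finset.sum_congr rfl fun i _ => by ring
    rw [eq_div_iff (hbpos j).ne']
    linarith [key]
  obtain ⟨j₀, -, hj₀⟩ := Finset.exists_max_image Finset.univ b
    ⟨Classical.arbitrary _, Finset.mem_univ _⟩
  set M := b j₀ with hM
  have hMpos : 0 < M := hbpos j₀
  have hble : ∀ j, b j ≤ M := fun j => hj₀ j (Finset.mem_univ j)
  -- step 1 : ∀ i, 1/M ≤ a i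
  have hage : ∀ i, 1 / M ≤ a i := by
    intro i
    have hR : 0 < ∑ j, P i j := Finset.sum_pos (fun j _ => hPpos i j) Finset.univ_nonempty
    have hsum : (∑ j, P i j) / a i ≤ (∑ j, P i j) * M := by
      rw [← hrow' i, Finset.sum_mul]
      exact Finset.sum_le_sum fun j _ =>
        mul_le_mul_of_nonneg_left (hble j) (le_of_lt (hPpos i j))
    rw [div_le_iff₀ (hapos i)] at hsum
    have h1 : 1 ≤ M * a i := by nlinarith
    rw [div_le_iff₀ hMpos]
    linarith
  -- step 2 : all a i = 1/M
  have haeq : ∀ i, a i = 1 / M := by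
    have hS : (0:ℝ) < ∑ i, P i j₀ := Finset.sum_pos (fun i _ => hPpos i j₀) Finset.univ_nonempty
    have hsum2 : ∑ i, P i j₀ * (a i - 1 / M) = 0 := by
      have expand : ∑ i, P i j₀ * (a i - 1 / M)
          = (∑ i, P i j₀ * a i) - (∑ i, P i j₀) * (1 / M) := by
        rw [Finset.sum_mul, ← Finset.sum_sub_distrib]
        exact Finset.sum_congr rfl fun i _ => by ring
      rw [expand, hcol' j₀, ← hM]
      field_simp
      ring
    have hz := (Finset.sum_eq_zero_iff_of_nonneg
      (fun i _ => mul_nonneg (hPpos i j₀).le (by linarith [hage i]))).mp hsum2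
    intro i
    have := hz i (Finset.mem_univ i)
    rcases mul_eq_zero.mp this with h | h
    · exact absurd h (hPpos i j₀).ne'
    · linarith
  -- step 3 : all b j = M
  have hbeq : ∀ j, b j = M := by
    set i₀ : Fin n := Classical.arbitrary _
    have hsum3 : ∑ j, P i₀ j * (M - b j) = 0 := by
      have expand : ∑ j, P i₀ j * (M - b j)
          = (∑ j, P i₀ j) * M - ∑ j, P i₀ j * b j := by
        rw [Finset.sum_mul, ← Finset.sum_sub_distrib]
        exact Finset.sum_congr rfl fun j _ => by ring
      rw [expand, hrow' i₀, haeq i₀]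
      field_simp
      ring
    have hz := (Finset.sum_eq_zero_iff_of_nonneg
      (fun j _ => mul_nonneg (hPpos i₀ j).le (by linarith [hble j]))).mp hsum3
    intro j
    have := hz j (Finset.mem_univ j)
    rcases mul_eq_zero.mp this with h | h
    · exact absurd h (hPpos i₀ j).ne'
    · linarith
  refine ⟨M, hMpos, fun i => ?_, fun j => ?_⟩
  · have := haeq i
    rw [ha] at this
    field_simp at this
    have h1 := (hd₁ i).ne'
    field_simp [div_eq_div_iff (hd₁ i).ne' hMpos.ne'] at this ⊢
    linarith [this]
  · have := hbeq j
    rw [hb] at this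
    rw [div_eq_iff (hd₂ j).ne'] at this
    linarith [this]

lemma ms_exists {n : ℕ} (hn : 0 < n) (C : Matrix (Fin n) (Fin n) ℝ)
    (hC : ∀ i j, 0 < C i j)
    (r c : Fin n → ℝ) (hr : ∀ i, 0 < r i) (hc : ∀ j, 0 < c j)
    (hrc : ∑ i, r i = ∑ j, c j) :
    ∃ d₁ d₂ : Fin n → ℝ, (∀ i, 0 < d₁ i) ∧ (∀ i, 0 < d₂ i) ∧
      (∀ i, ∑ j, d₁ i * C i j * d₂ j = r i) ∧
      (∀ j, ∑ i, d₁ i * C i j * d₂ j = c j) := by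
  haveI : Nonempty (Fin n) := ⟨⟨0, hn⟩⟩
  -- the objective function
  set A : (Fin n → ℝ) → Fin n → ℝ := fun u i => ∑ j, C i j * u j with hA
  set G : (Fin n → ℝ) → ℝ :=
    fun u => (∑ i, r i * Real.log (A u i)) - ∑ j, c j * Real.log (u j) with hG
  -- positive lower bound for C
  obtain ⟨p, -, hp⟩ := Finset.exists_min_image (Finset.univ : Finset (Fin n × Fin n))
    (fun q => C q.1 q.2) ⟨Classical.arbitrary _, Finset.mem_univ _⟩
  set m : ℝ := C p.1 p.2 with hm
  have hmpos : 0 < m := hC p.1 p.2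
  have hmC : ∀ i j, m ≤ C i j := fun i j => hp (i, j) (Finset.mem_univ _)
  -- minimum of c
  obtain ⟨j₁, -, hj₁⟩ := Finset.exists_min_image Finset.univ c
    ⟨Classical.arbitrary _, Finset.mem_univ _⟩
  set cm : ℝ := c j₁ with hcm
  have hcmpos : 0 < cm := hc j₁
  have hcmle : ∀ j, cm ≤ c j := fun j => hj₁ j (Finset.mem_univ _)
  set R : ℝ := ∑ i, r i with hR
  -- base point
  set u₀ : Fin n → ℝ := fun _ => (n : ℝ)⁻¹ with hu₀
  have hnpos : (0:ℝ) < n := Nat.cast_pos.mpr hn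
  have hninv : (0:ℝ) < (n:ℝ)⁻¹ := inv_pos.mpr hnpos
  have hninv1 : (n:ℝ)⁻¹ ≤ 1 := by
    rw [inv_le_one_iff₀]; right; exact_mod_cast hn
  set A₀ : ℝ := G u₀ with hA₀
  set δ : ℝ := min ((n:ℝ)⁻¹) (Real.exp ((R * Real.log m - A₀ - 1) / cm)) with hδ
  have hδpos : 0 < δ := lt_min hninv (Real.exp_pos _)
  have hδn : δ ≤ (n:ℝ)⁻¹ := min_le_left _ _
  have hδ1 : δ ≤ 1 := hδn.trans hninv1
  -- A u i ≥ m on the simplex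
  have hAm : ∀ u : Fin n → ℝ, (∀ j, 0 ≤ u j) → (∑ j, u j = 1) → ∀ i, m ≤ A u i := by
    intro u hpos hsum i
    calc m = ∑ j, m * u j := by rw [← Finset.mul_sum, hsum, mul_one]
    _ ≤ ∑ j, C i j * u j := Finset.sum_le_sum fun j _ =>
        mul_le_mul_of_nonneg_right (hmC i j) (hpos j)
  -- boundary blowup
  have hboundary : ∀ u : Fin n → ℝ, (∀ j, 0 < u j) → (∑ j, u j = 1) →
      ∀ j₀, u j₀ ≤ δ → A₀ + 1 ≤ G u := by
    intro u hpos hsum j₀ hj₀u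
    have hle1 : ∀ j, u j ≤ 1 := by
      intro j
      calc u j ≤ ∑ j', u j' := Finset.single_le_sum (fun j' _ => (hpos j').le) (Finset.mem_univ j)
      _ = 1 := hsum
    have h1 : R * Real.log m ≤ ∑ i, r i * Real.log (A u i) := by
      rw [hR, Finset.sum_mul]
      exact Finset.sum_le_sum fun i _ => mul_le_mul_of_nonneg_left
        (Real.log_le_log hmpos (hAm u (fun j => (hpos j).le) hsum i)) (hr i).le
    have h2 : ∑ j, c j * Real.log (u j) ≤ cm * Real.log δ := by
      have hterm : ∀ j, c j * Real.log (u j) ≤ 0 := fun j =>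
        mul_nonpos_of_nonneg_of_nonpos (hc j).le (Real.log_nonpos (hpos j).le (hle1 j))
      have hsplit : ∑ j, c j * Real.log (u j)
          = c j₀ * Real.log (u j₀) + ∑ j ∈ Finset.univ.erase j₀, c j * Real.log (u j) := by
        rw [← Finset.add_sum_erase _ _ (Finset.mem_univ j₀)]
      have hrest : ∑ j ∈ Finset.univ.erase j₀, c j * Real.log (u j) ≤ 0 :=
        Finset.sum_nonpos fun j _ => hterm j
      have hlog : Real.log (u j₀) ≤ Real.log δ := Real.log_le_log (hpos j₀) hj₀u
      have hlogδ : Real.log δ ≤ 0 := Real.log_nonpos hδpos.le hδ1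
      have hstep : c j₀ * Real.log (u j₀) ≤ cm * Real.log δ := by
        calc c j₀ * Real.log (u j₀) ≤ c j₀ * Real.log δ :=
              mul_le_mul_of_nonneg_left hlog (hc j₀).le
        _ ≤ cm * Real.log δ := mul_le_mul_of_nonpos_right (hcmle j₀) hlogδ
      linarith
    have h3 : cm * Real.log δ ≤ R * Real.log m - A₀ - 1 := by
      have : Real.log δ ≤ (R * Real.log m - A₀ - 1) / cm := by
        calc Real.log δ ≤ Real.log (Real.exp ((R * Real.log m - A₀ - 1) / cm)) :=
              Real.log_le_log hδpos (min_le_right _ _)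
        _ = (R * Real.log m - A₀ - 1) / cm := Real.log_exp _
      calc cm * Real.log δ ≤ cm * ((R * Real.log m - A₀ - 1) / cm) :=
            mul_le_mul_of_nonneg_left this hcmpos.le
      _ = R * Real.log m - A₀ - 1 := by field_simp
    rw [hG]
    simp only []
    linarith
  -- the compact set
  set K : Set (Fin n → ℝ) :=
    {u | (∀ j, δ/2 ≤ u j) ∧ (∀ j, u j ≤ 1) ∧ ∑ j, u j = 1} with hK
  have hKcompact : IsCompact K := by
    have hKeq : K = Set.Icc (fun _ => δ/2) (fun _ => (1:ℝ)) ∩ {u | ∑ j, u j = 1} := by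
      ext u
      simp only [hK, Set.mem_setOf_eq, Set.mem_inter_iff, Set.mem_Icc, Pi.le_def]
      tauto
    rw [hKeq]
    exact isCompact_Icc.inter_right
      (isClosed_eq (continuous_finset_sum _ fun j _ => continuous_apply j) continuous_const)
  have hu₀K : u₀ ∈ K := by
    refine ⟨fun j => ?_, fun j => hninv1, ?_⟩
    · calc δ/2 ≤ δ := by linarith
      _ ≤ (n:ℝ)⁻¹ := hδn
    · simp [hu₀, Finset.card_univ]
      field_simp
  have hKpos : ∀ u ∈ K, ∀ j, 0 < u j := fun u hu j => lt_of_lt_of_le (by linarith) (hu.1 j)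
  have hGcont : ContinuousOn G K := by
    apply ContinuousOn.sub
    · apply continuousOn_finset_sum
      intro i _
      apply ContinuousOn.mul continuousOn_const
      apply ContinuousOn.log
      · exact (continuous_finset_sum _ fun j _ => (continuous_const.mul (continuous_apply j))).continuousOn
      · intro u hu
        exact ne_of_gt (lt_of_lt_of_le hmpos (hAm u (fun j => (hKpos u hu j).le) hu.2.2 i))
    · apply continuousOn_finset_sum
      intro j _
      exact ContinuousOn.mul continuousOn_const
        (ContinuousOn.log (continuous_apply j).continuousOn
          fun u hu => ne_of_gt (hKpos u hu j))
  obtain ⟨u, huK, humin⟩ := hKcompact.exists_isMinOn ⟨u₀, hu₀K⟩ hGcont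
  have hupos : ∀ j, 0 < u j := hKpos u huK
  have husum : ∑ j, u j = 1 := huK.2.2
  -- minimizer is away from boundary
  have huδ : ∀ j, δ ≤ u j := by
    intro j
    by_contra hlt
    push_neg at hlt
    have h1 : A₀ + 1 ≤ G u := hboundary u hupos husum j hlt.le
    have h2 : G u ≤ A₀ := humin hu₀K
    linarith
  -- scale invariance
  have hscale : ∀ t : ℝ, 0 < t → ∀ v : Fin n → ℝ, (∀ j, 0 < v j) → G (t • v) = G v := by
    intro t ht v hv
    have hAv : ∀ i, 0 < A v i := fun i =>
      Finset.sum_pos (fun j _ => mul_pos (hC i j) (hv j)) Finset.univ_nonempty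
    have hAs : ∀ i, A (t • v) i = t * A v i := by
      intro i
      rw [hA, Finset.mul_sum]
      exact Finset.sum_congr rfl fun j _ => by simp [Pi.smul_apply]; ring
    rw [hG]
    simp only []
    have e1 : ∑ i, r i * Real.log (A (t • v) i)
        = (∑ i, r i) * Real.log t + ∑ i, r i * Real.log (A v i) := by
      rw [Finset.sum_mul, ← Finset.sum_add_distrib]
      refine Finset.sum_congr rfl fun i _ => ?_
      rw [hAs i, Real.log_mul ht.ne' (hAv i).ne']
      ring
    have e2 : ∑ j, c j * Real.log ((t • v) j)
        = (∑ j, c j) * Real.log t + ∑ j, c j * Real.log (v j) := by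
      rw [Finset.sum_mul, ← Finset.sum_add_distrib]
      refine Finset.sum_congr rfl fun j _ => ?_
      rw [Pi.smul_apply, smul_eq_mul, Real.log_mul ht.ne' (hv j).ne']
      ring
    rw [e1, e2, ← hR, hrc]
    ring
  -- local minimum in the open orthant
  have hloc : IsLocalMin G u := by
    rw [IsLocalMin, IsMinFilter]
    rw [Metric.eventually_nhds_iff]
    refine ⟨δ / (8 * n), by positivity, ?_⟩
    intro v hv
    have hvj : ∀ j, |v j - u j| < δ / (8 * n) := by
      intro j
      calc |v j - u j| = dist (v j) (u j) := (Real.dist_eq _ _).symm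
      _ ≤ dist v u := dist_le_pi_dist v u j
      _ < δ / (8 * n) := hv
    have hδ8 : δ / (8 * n) ≤ δ / 8 := by
      apply div_le_div_of_nonneg_left hδpos.le (by norm_num)
      have : (1:ℝ) ≤ n := by exact_mod_cast hn
      nlinarith
    have hvpos : ∀ j, 7 * δ / 8 ≤ v j := by
      intro j
      have := abs_lt.mp (hvj j)
      have h := huδ j
      linarith [hδ8, (abs_lt.mp (hvj j)).1]
    have hSsum : |(∑ j, v j) - 1| ≤ δ / 8 := by
      have : (∑ j, v j) - 1 = ∑ j, (v j - u j) := by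
        rw [Finset.sum_sub_distrib, husum]
      rw [this]
      calc |∑ j, (v j - u j)| ≤ ∑ j, |v j - u j| := Finset.abs_sum_le_sum_abs _ _
      _ ≤ ∑ _j : Fin n, δ / (8 * n) := Finset.sum_le_sum fun j _ => (hvj j).le
      _ = n * (δ / (8 * n)) := by rw [Finset.sum_const, Finset.card_univ]; simp [mul_comm]
      _ = δ / 8 := by field_simp
    set S : ℝ := ∑ j, v j with hS
    have hδ18 : δ / 8 ≤ 1 / 8 := by linarith [hδ1]
    have hSlb : 7/8 ≤ S := by
      have := abs_le.mp hSsum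
      linarith [this.1]
    have hSub : S ≤ 9/8 := by
      have := abs_le.mp hSsum
      linarith [this.2]
    have hSpos : 0 < S := by linarith
    set w : Fin n → ℝ := S⁻¹ • v with hw
    have hwK : w ∈ K := by
      refine ⟨fun j => ?_, fun j => ?_, ?_⟩
      · have h1 : δ/2 * S ≤ 7 * δ / 8 := by nlinarith
        have h2 : δ/2 * S ≤ v j := h1.trans (hvpos j)
        rw [hw, Pi.smul_apply, smul_eq_mul]
        calc δ/2 ≤ v j / S := by rw [le_div_iff₀ hSpos]; linarith [h2]
        _ = S⁻¹ * v j := by ring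
      · have hvle : v j ≤ S := by
          rw [hS]
          exact Finset.single_le_sum (fun j' _ => le_trans (by positivity) (hvpos j')) (Finset.mem_univ j)
        rw [hw, Pi.smul_apply, smul_eq_mul]
        calc S⁻¹ * v j = v j / S := by ring
        _ ≤ 1 := by rw [div_le_one hSpos]; exact hvle
      · rw [hw]
        simp only [Pi.smul_apply, smul_eq_mul, ← Finset.mul_sum, ← hS]
        field_simp
    have hweq : v = S • w := by
      rw [hw, smul_smul, mul_inv_cancel₀ hSpos.ne', one_smul]
    have hwpos : ∀ j, 0 < w j := hKpos w hwK
    calc G u ≤ G w := humin hwK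
    _ = G (S • w) := (hscale S hSpos w hwpos).symm
    _ = G v := by rw [← hweq]
  -- first-order conditions
  have hAu : ∀ i, 0 < A u i := fun i =>
    Finset.sum_pos (fun j _ => mul_pos (hC i j) (hupos j)) Finset.univ_nonempty
  have hFOC : ∀ k, ∑ i, r i * C i k / A u i = c k / u k := by
    intro k
    set φ : ℝ → ℝ := fun t => G (u + t • (Pi.single k 1 : Fin n → ℝ)) with hφ
    have hAt : ∀ (t : ℝ) (i : Fin n), A (u + t • (Pi.single k 1 : Fin n → ℝ)) i = A u i + t * C i k := by
      intro t i
      rw [hA]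
      simp only [Pi.add_apply, Pi.smul_apply, smul_eq_mul, mul_add, Finset.sum_add_distrib]
      congr 1
      have h1 : ∀ j, C i j * (t * (Pi.single k 1 : Fin n → ℝ) j) = if j = k then t * C i k else 0 := by
        intro j
        rcases eq_or_ne j k with h | h <;> simp [h, Pi.single_apply] <;> ring
      rw [Finset.sum_congr rfl fun j _ => h1 j,
        Finset.sum_ite_eq' Finset.univ k fun _ => t * C i k]
      simp
    have hφeq : φ = fun t => (∑ i, r i * Real.log (A u i + t * C i k))
        - ∑ j, c j * Real.log (u j + t * (Pi.single k 1 : Fin n → ℝ) j) := by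
      funext t
      rw [hφ, hG]
      simp only [Pi.add_apply, Pi.smul_apply, smul_eq_mul]
      congr 1
      exact Finset.sum_congr rfl fun i _ => by rw [hAt t i]
    have hder : HasDerivAt φ
        ((∑ i, r i * ((1 * C i k) / (A u i + 0 * C i k)))
          - ∑ j, c j * ((1 * (Pi.single k 1 : Fin n → ℝ) j) / (u j + 0 * (Pi.single k 1 : Fin n → ℝ) j))) 0 := by
      rw [hφeq]
      apply HasDerivAt.sub
      · apply HasDerivAt.fun_sum
        intro i _
        exact ((((hasDerivAt_id (0:ℝ)).mul_const (C i k)).const_add (A u i)).log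
          (by simp [(hAu i).ne'])).const_mul (r i)
      · apply HasDerivAt.fun_sum
        intro j _
        exact ((((hasDerivAt_id (0:ℝ)).mul_const ((Pi.single k 1 : Fin n → ℝ) j)).const_add (u j)).log
          (by simp [(hupos j).ne'])).const_mul (c j)
    have hφmin : IsLocalMin φ 0 := by
      have hcont : ContinuousAt (fun t : ℝ => u + t • (Pi.single k 1 : Fin n → ℝ)) 0 := by
        exact (continuous_const.add (continuous_id.smul continuous_const)).continuousAt
      have hmap : (fun t : ℝ => u + t • (Pi.single k 1 : Fin n → ℝ)) 0 = u := by
        simp only [zero_smul, add_zero]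
      have hev := hcont.tendsto
      simp only [zero_smul, add_zero] at hev
      have := hev.eventually hloc
      refine this.mono fun t ht => ?_
      have hφ0 : φ 0 = G u := by rw [hφ]; simp only [zero_smul, add_zero]
      rw [hφ0]
      exact ht
    have hder0 : (∑ i, r i * ((1 * C i k) / (A u i + 0 * C i k)))
        - ∑ j, c j * ((1 * (Pi.single k 1 : Fin n → ℝ) j) / (u j + 0 * (Pi.single k 1 : Fin n → ℝ) j)) = 0 := by
      rw [← hder.deriv]
      exact hφmin.deriv_eq_zero
    simp only [one_mul, zero_mul, add_zero] at hder0
    have hsingle : ∑ j, c j * ((Pi.single k 1 : Fin n → ℝ) j / (u j)) = c k / u k := by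
      rw [Finset.sum_eq_single k]
      · simp [div_eq_mul_inv]
      · intro j _ hjk
        simp [Pi.single_apply, hjk]
      · intro h
        exact absurd (Finset.mem_univ k) h
    rw [hsingle] at hder0
    rw [← sub_eq_zero, ← hder0]
    congr 1
    exact Finset.sum_congr rfl fun i _ => by ring
  -- build the scaling
  refine ⟨fun i => r i / A u i, u, fun i => div_pos (hr i) (hAu i), hupos, fun i => ?_, fun k => ?_⟩
  · have step : ∑ j, r i / A u i * C i j * u j = r i / A u i * ∑ j, C i j * u j := by
      rw [Finset.mul_sum]
      exact Finset.sum_congr rfl fun j _ => by ring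
    rw [step]
    have h2 : A u i = ∑ j, C i j * u j := by rw [hA]
    rw [← h2]
    exact div_mul_cancel₀ _ (hAu i).ne'
  · have step : ∑ i, r i / A u i * C i k * u k = (∑ i, r i * C i k / A u i) * u k := by
      rw [Finset.sum_mul]
      exact Finset.sum_congr rfl fun i _ => by ring
    rw [step, hFOC k]
    exact div_mul_cancel₀ _ (hupos k).ne'

/-- matrix scaling: a strictly positive matrix C can be scaled
by positive diagonal matrices to attain prescribed positive row sums r and
column sums c with rᵀe = cᵀe; the scaled matrix is unique, and the diagonal
scalings are unique up to a scalar factor. -/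
theorem matrix_scaling (n : ℕ) (C : Matrix (Fin n) (Fin n) ℝ)
    (hCpos : ∀ i j, 0 < C i j)
    (r c : Fin n → ℝ) (hr : ∀ i, 0 < r i) (hc : ∀ j, 0 < c j)
    (hrc : ∑ i, r i = ∑ j, c j) :
    ∃ d₁ d₂ : Fin n → ℝ, (∀ i, 0 < d₁ i) ∧ (∀ i, 0 < d₂ i) ∧
      (∀ i, ∑ j, (Matrix.diagonal d₁ * C * Matrix.diagonal d₂) i j = r i) ∧
      (∀ j, ∑ i, (Matrix.diagonal d₁ * C * Matrix.diagonal d₂) i j = c j) ∧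
      ∀ e₁ e₂ : Fin n → ℝ, (∀ i, 0 < e₁ i) → (∀ i, 0 < e₂ i) →
        (∀ i, ∑ j, (Matrix.diagonal e₁ * C * Matrix.diagonal e₂) i j = r i) →
        (∀ j, ∑ i, (Matrix.diagonal e₁ * C * Matrix.diagonal e₂) i j = c j) →
        (Matrix.diagonal e₁ * C * Matrix.diagonal e₂
          = Matrix.diagonal d₁ * C * Matrix.diagonal d₂) ∧
        ∃ α : ℝ, 0 < α ∧ (∀ i, d₁ i = α * e₁ i) ∧ (∀ i, α * d₂ i = e₂ i) := by
  have hentry : ∀ (f g : Fin n → ℝ) (i j : Fin n),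
      (Matrix.diagonal f * C * Matrix.diagonal g) i j = f i * C i j * g j := by
    intro f g i j
    simp [Matrix.mul_apply, Matrix.diagonal, Finset.sum_ite_eq]
  rcases Nat.eq_zero_or_pos n with hn | hn
  · subst hn
    refine ⟨fun i => 1, fun i => 1, fun i => i.elim0, fun i => i.elim0,
      fun i => i.elim0, fun j => j.elim0, fun e₁ e₂ _ _ _ _ => ?_⟩
    exact ⟨Subsingleton.elim _ _, 1, one_pos, fun i => i.elim0, fun i => i.elim0⟩
  · obtain ⟨d₁, d₂, hd₁, hd₂, hdrow, hdcol⟩ := ms_exists hn C hCpos r c hr hc hrc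
    refine ⟨d₁, d₂, hd₁, hd₂, ?_, ?_, ?_⟩
    · intro i
      rw [Finset.sum_congr rfl fun j _ => hentry d₁ d₂ i j]
      exact hdrow i
    · intro j
      rw [Finset.sum_congr rfl fun i _ => hentry d₁ d₂ i j]
      exact hdcol j
    · intro e₁ e₂ he₁ he₂ herow hecol
      have herow' : ∀ i, ∑ j, e₁ i * C i j * e₂ j = ∑ j, d₁ i * C i j * d₂ j := by
        intro i
        rw [← Finset.sum_congr rfl fun j _ => hentry e₁ e₂ i j, herow i, ← hdrow i]
      have hecol' : ∀ j, ∑ i, e₁ i * C i j * e₂ j = ∑ i, d₁ i * C i j * d₂ j := by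
        intro j
        rw [← Finset.sum_congr rfl fun i _ => hentry e₁ e₂ i j, hecol j, ← hdcol j]
      obtain ⟨α, hα, h1, h2⟩ := ms_unique hn C hCpos d₁ d₂ e₁ e₂ hd₁ hd₂ he₁ he₂ herow' hecol'
      refine ⟨?_, α, hα, h1, h2⟩
      ext i j
      rw [hentry, hentry, h1 i, ← h2 j]
      ring
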